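/- Let S₁ ⊆ S₂ ⊆ S₃ ⊆ ... be an increasing sequence of closed subsets of [0,1], each containing {0,1}, and let S be the closure of their union. For a Lebesgue-integrable function ψ : [0,1] → ℝ^d, the functions E_{S_n}ψ converge to E_S ψ almost everywhere on [0,1]. -/

import Mathlib

open scoped Classical
open Set MeasureTheory Filter
open scoped Topology

noncomputable def lep (T : Set ℝ) (x : ℝ) : ℝ := sSup (T ∩ Iic x)
noncomputable def rep (T : Set ℝ) (x : ℝ) : ℝ := sInf (T ∩ Ici x)

section endpoints
variable {T : Set ℝ} {x : ℝ}

lemma lep_mem (hT : IsClosed T) (h0 : (0:ℝ) ∈ T) (hx : x ∈ Icc (0:ℝ) 1) :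
    lep T x ∈ T ∩ Iic x :=
  (hT.inter isClosed_Iic).csSup_mem ⟨0, h0, hx.1⟩ ⟨x, fun _ hy => hy.2⟩

lemma rep_mem (hT : IsClosed T) (h1 : (1:ℝ) ∈ T) (hx : x ∈ Icc (0:ℝ) 1) :
    rep T x ∈ T ∩ Ici x :=
  (hT.inter isClosed_Ici).csInf_mem ⟨1, h1, hx.2⟩ ⟨x, fun _ hy => hy.2⟩

lemma lep_lt (hT : IsClosed T) (h0 : (0:ℝ) ∈ T) (hx : x ∈ Icc (0:ℝ) 1) (hxT : x ∉ T) :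
    lep T x < x :=
  lt_of_le_of_ne (lep_mem hT h0 hx).2 (fun h => hxT (h ▸ (lep_mem hT h0 hx).1))

lemma lt_rep (hT : IsClosed T) (h1 : (1:ℝ) ∈ T) (hx : x ∈ Icc (0:ℝ) 1) (hxT : x ∉ T) :
    x < rep T x :=
  lt_of_le_of_ne (rep_mem hT h1 hx).2 (fun h => hxT (h ▸ (rep_mem hT h1 hx).1))

lemma lep_nonneg (h0 : (0:ℝ) ∈ T) (hx : x ∈ Icc (0:ℝ) 1) : 0 ≤ lep T x :=
  le_csSup ⟨x, fun _ hy => hy.2⟩ ⟨h0, hx.1⟩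

lemma rep_le_one (h1 : (1:ℝ) ∈ T) (hx : x ∈ Icc (0:ℝ) 1) : rep T x ≤ 1 :=
  csInf_le ⟨x, fun _ hy => hy.2⟩ ⟨h1, hx.2⟩

lemma comp_eq (hT : IsClosed T) (h0 : (0:ℝ) ∈ T) (h1 : (1:ℝ) ∈ T)
    (hx : x ∈ Icc (0:ℝ) 1) (hxT : x ∉ T) :
    connectedComponentIn (Icc (0:ℝ) 1 \ T) x = Ioo (lep T x) (rep T x) := by
  have hxmem : x ∈ Ioo (lep T x) (rep T x) :=
    ⟨lep_lt hT h0 hx hxT, lt_rep hT h1 hx hxT⟩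
  have hsub : Ioo (lep T x) (rep T x) ⊆ Icc (0:ℝ) 1 \ T := by
    intro y hy
    refine ⟨⟨le_trans (lep_nonneg h0 hx) hy.1.le, le_trans hy.2.le (rep_le_one h1 hx)⟩, ?_⟩
    intro hyT
    rcases le_total y x with h | h
    · have : y ≤ lep T x := le_csSup ⟨x, fun _ hz => hz.2⟩ (⟨hyT, h⟩ : y ∈ T ∩ Iic x)
      exact absurd this (not_le.mpr hy.1)
    · have : rep T x ≤ y := csInf_le ⟨x, fun _ hz => hz.2⟩ (⟨hyT, h⟩ : y ∈ T ∩ Ici x)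
      exact absurd this (not_le.mpr hy.2)
  refine subset_antisymm ?_ (isPreconnected_Ioo.subset_connectedComponentIn hxmem hsub)
  intro y hy
  have hC : IsPreconnected (connectedComponentIn (Icc (0:ℝ) 1 \ T) x) :=
    isPreconnected_connectedComponentIn
  have hCsub := connectedComponentIn_subset (Icc (0:ℝ) 1 \ T) x
  have hxC : x ∈ connectedComponentIn (Icc (0:ℝ) 1 \ T) x :=
    mem_connectedComponentIn ⟨hx, hxT⟩
  have hoc : OrdConnected (connectedComponentIn (Icc (0:ℝ) 1 \ T) x) := hC.ordConnected
  constructor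
  · by_contra h
    push_neg at h
    have : lep T x ∈ connectedComponentIn (Icc (0:ℝ) 1 \ T) x :=
      hoc.out hy hxC ⟨h, (lep_lt hT h0 hx hxT).le⟩
    exact (hCsub this).2 (lep_mem hT h0 hx).1
  · by_contra h
    push_neg at h
    have : rep T x ∈ connectedComponentIn (Icc (0:ℝ) 1 \ T) x :=
      hoc.out hxC hy ⟨(lt_rep hT h1 hx hxT).le, h⟩
    exact (hCsub this).2 (rep_mem hT h1 hx).1

end endpoints

lemma countable_rightGaps (T : Set ℝ) :
    {x : ℝ | x ∈ T ∧ ∃ y, x < y ∧ Ioo x y ∩ T = ∅}.Countable := by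
  have : {x : ℝ | x ∈ T ∧ ∃ y, x < y ∧ Ioo x y ∩ T = ∅} ⊆
      ⋃ q : ℚ, {x : ℝ | x ∈ T ∧ x < (q:ℝ) ∧ Ioo x (q:ℝ) ∩ T = ∅} := by
    rintro x ⟨hxT, y, hxy, hgap⟩
    obtain ⟨q, hq1, hq2⟩ := exists_rat_btwn hxy
    refine mem_iUnion.mpr ⟨q, hxT, hq1, ?_⟩
    apply eq_empty_of_subset_empty
    rw [← hgap]
    exact fun z hz => ⟨⟨hz.1.1, hz.1.2.trans hq2⟩, hz.2⟩
  refine Set.Countable.mono this (countable_iUnion fun q => ?_)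
  apply Set.Subsingleton.countable
  rintro a ⟨haT, haq, hagap⟩ b ⟨hbT, hbq, hbgap⟩
  by_contra hne
  rcases lt_or_gt_of_ne hne with h | h
  · exact Set.eq_empty_iff_forall_notMem.mp hagap b ⟨⟨h, hbq⟩, hbT⟩
  · exact Set.eq_empty_iff_forall_notMem.mp hbgap a ⟨⟨h, haq⟩, haT⟩

lemma countable_leftGaps (T : Set ℝ) :
    {x : ℝ | x ∈ T ∧ ∃ y, y < x ∧ Ioo y x ∩ T = ∅}.Countable := by
  have : {x : ℝ | x ∈ T ∧ ∃ y, y < x ∧ Ioo y x ∩ T = ∅} ⊆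
      ⋃ q : ℚ, {x : ℝ | x ∈ T ∧ (q:ℝ) < x ∧ Ioo (q:ℝ) x ∩ T = ∅} := by
    rintro x ⟨hxT, y, hxy, hgap⟩
    obtain ⟨q, hq1, hq2⟩ := exists_rat_btwn hxy
    refine mem_iUnion.mpr ⟨q, hxT, hq2, ?_⟩
    apply eq_empty_of_subset_empty
    rw [← hgap]
    exact fun z hz => ⟨⟨hq1.trans hz.1.1, hz.1.2⟩, hz.2⟩
  refine Set.Countable.mono this (countable_iUnion fun q => ?_)
  apply Set.Subsingleton.countable
  rintro a ⟨haT, haq, hagap⟩ b ⟨hbT, hbq, hbgap⟩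
  by_contra hne
  rcases lt_or_gt_of_ne hne with h | h
  · exact Set.eq_empty_iff_forall_notMem.mp hbgap a ⟨⟨haq, h⟩, haT⟩
  · exact Set.eq_empty_iff_forall_notMem.mp hagap b ⟨⟨hbq, h⟩, hbT⟩

/-- The "conditional expectation" of `ψ` with respect to the closed set `S ⊆ [0,1]`:
it equals `ψ x` for `x ∈ S` and the average of `ψ` over the complementary interval
(connected component of `[0,1] \ S`) containing `x` otherwise. -/
noncomputable def condExpSet {d : ℕ} (S : Set ℝ) (ψ : ℝ → EuclideanSpace ℝ (Fin d)) (x : ℝ) :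
    EuclideanSpace ℝ (Fin d) :=
  if x ∈ S then ψ x
  else ⨍ y in connectedComponentIn (Set.Icc (0:ℝ) 1 \ S) x, ψ y

theorem condExpSet_tendsto_ae
    (d : ℕ) (S : ℕ → Set ℝ)
    (hclosed : ∀ n, IsClosed (S n))
    (hsub : ∀ n, S n ⊆ Set.Icc (0:ℝ) 1)
    (hmono : ∀ n, S n ⊆ S (n+1))
    (h01 : ∀ n, (0:ℝ) ∈ S n ∧ (1:ℝ) ∈ S n)
    (ψ : ℝ → EuclideanSpace ℝ (Fin d))
    (hψ : IntegrableOn ψ (Set.Icc (0:ℝ) 1)) :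
    ∀ᵐ x ∂(volume.restrict (Set.Icc (0:ℝ) 1)),
      Tendsto (fun n => condExpSet (S n) ψ x) atTop
        (nhds (condExpSet (closure (⋃ n, S n)) ψ x)) := by
  set Sc := closure (⋃ n, S n) with hScdef
  have hScClosed : IsClosed Sc := isClosed_closure
  have hScSub : Sc ⊆ Icc (0:ℝ) 1 := closure_minimal (iUnion_subset hsub) isClosed_Icc
  have hSc0 : (0:ℝ) ∈ Sc := subset_closure (mem_iUnion.mpr ⟨0, (h01 0).1⟩)
  have hSc1 : (1:ℝ) ∈ Sc := subset_closure (mem_iUnion.mpr ⟨0, (h01 0).2⟩)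
  have hmono' : ∀ m n, m ≤ n → S m ⊆ S n := by
    intro m n hmn
    induction n with
    | zero => simpa [Nat.le_zero.mp hmn] using subset_rfl
    | succ k ih =>
      rcases Nat.lt_or_ge m (k+1) with h | h
      · exact (ih (Nat.lt_succ_iff.mp h)).trans (hmono k)
      · have : m = k + 1 := le_antisymm hmn h
        simpa [this] using subset_rfl
  have hSnSc : ∀ n, S n ⊆ Sc := fun n => (subset_iUnion S n).trans subset_closure
  set ψ' : ℝ → EuclideanSpace ℝ (Fin d) := (Icc (0:ℝ) 1).indicator ψ with hψ'def
  have hψ'int : Integrable ψ' := (integrable_indicator_iff measurableSet_Icc).mpr hψ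
  have hψ'loc : LocallyIntegrable ψ' volume := hψ'int.locallyIntegrable
  -- congr lemma for integrals over subintervals
  have hIooInt : ∀ a b : ℝ, 0 ≤ a → b ≤ 1 →
      ∫ y in Ioo a b, ψ y = ∫ y in Ioo a b, ψ' y := by
    intro a b ha hb
    have heq : EqOn ψ ψ' (Ioo a b) := fun y hy =>
      (Set.indicator_of_mem (show y ∈ Icc (0:ℝ) 1 from ⟨ha.trans hy.1.le, hy.2.le.trans hb⟩) ψ).symm
    exact setIntegral_congr_fun measurableSet_Ioo heq
  have hLeb := IsUnifLocDoublingMeasure.ae_tendsto_average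
    (μ := (volume : Measure ℝ)) hψ'loc 1
  have hGapR := ((countable_rightGaps Sc).measure_zero (volume : Measure ℝ))
  have hGapL := ((countable_leftGaps Sc).measure_zero (volume : Measure ℝ))
  filter_upwards [ae_restrict_mem measurableSet_Icc, ae_restrict_of_ae hLeb,
    ae_restrict_of_ae (measure_eq_zero_iff_ae_notMem.mp hGapR),
    ae_restrict_of_ae (measure_eq_zero_iff_ae_notMem.mp hGapL)]
    with x hxI hxLeb hxR hxL
  by_cases hxU : x ∈ ⋃ n, S n
  · -- x belongs to some Sₙ₀, hence to all later ones and to Sc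
    obtain ⟨n₀, hn₀⟩ := mem_iUnion.mp hxU
    have hxSc : x ∈ Sc := subset_closure hxU
    have hR : condExpSet Sc ψ x = ψ x := if_pos hxSc
    rw [hR]
    refine Tendsto.congr' ?_ (tendsto_const_nhds (x := ψ x))
    filter_upwards [eventually_ge_atTop n₀] with n hn
    exact (if_pos (hmono' n₀ n hn hn₀)).symm
  · have hxSn : ∀ n, x ∉ S n := fun n h => hxU (mem_iUnion.mpr ⟨n, h⟩)
    have hAn_lt : ∀ n, lep (S n) x < x :=
      fun n => lep_lt (hclosed n) (h01 n).1 hxI (hxSn n)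
    have hBn_gt : ∀ n, x < rep (S n) x :=
      fun n => lt_rep (hclosed n) (h01 n).2 hxI (hxSn n)
    have hAmono : Monotone fun n => lep (S n) x := by
      intro m n hmn
      exact csSup_le_csSup ⟨x, fun _ hy => hy.2⟩ ⟨0, (h01 m).1, hxI.1⟩
        (fun y hy => ⟨hmono' m n hmn hy.1, hy.2⟩)
    have hBanti : Antitone fun n => rep (S n) x := by
      intro m n hmn
      exact csInf_le_csInf ⟨x, fun _ hy => hy.2⟩ ⟨1, (h01 m).2, hxI.2⟩
        (fun y hy => ⟨hmono' m n hmn hy.1, hy.2⟩)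
    set A := ⨆ n, lep (S n) x with hAdef
    set B := ⨅ n, rep (S n) x with hBdef
    have hAbdd : BddAbove (range fun n => lep (S n) x) :=
      ⟨x, forall_mem_range.mpr fun n => (hAn_lt n).le⟩
    have hBbdd : BddBelow (range fun n => rep (S n) x) :=
      ⟨x, forall_mem_range.mpr fun n => (hBn_gt n).le⟩
    have hAtend : Tendsto (fun n => lep (S n) x) atTop (𝓝 A) :=
      tendsto_atTop_ciSup hAmono hAbdd
    have hBtend : Tendsto (fun n => rep (S n) x) atTop (𝓝 B) :=
      tendsto_atTop_ciInf hBanti hBbdd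
    have hAleA : ∀ n, lep (S n) x ≤ A := fun n => le_ciSup hAbdd n
    have hBgeB : ∀ n, B ≤ rep (S n) x := fun n => ciInf_le hBbdd n
    have hAlex : A ≤ x := ciSup_le fun n => (hAn_lt n).le
    have hBgex : x ≤ B := le_ciInf fun n => (hBn_gt n).le
    -- gaps
    have hgapUL : ∀ z, A < z → z < x → z ∉ ⋃ n, S n := by
      rintro z hz1 hz2 hz
      obtain ⟨m, hm⟩ := mem_iUnion.mp hz
      have : z ≤ lep (S m) x := le_csSup ⟨x, fun _ hy => hy.2⟩ ⟨hm, hz2.le⟩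
      exact absurd (this.trans (hAleA m)) (not_le.mpr hz1)
    have hgapUR : ∀ z, x < z → z < B → z ∉ ⋃ n, S n := by
      rintro z hz1 hz2 hz
      obtain ⟨m, hm⟩ := mem_iUnion.mp hz
      have : rep (S m) x ≤ z := csInf_le ⟨x, fun _ hy => hy.2⟩ ⟨hm, hz1.le⟩
      exact absurd ((hBgeB m).trans this) (not_le.mpr hz2)
    have hgapScL : ∀ z, A < z → z < x → z ∉ Sc := by
      intro z hz1 hz2 hz
      obtain ⟨w, hw1, hw2⟩ := mem_closure_iff.mp hz (Ioo A x) isOpen_Ioo ⟨hz1, hz2⟩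
      exact hgapUL w hw1.1 hw1.2 hw2
    have hgapScR : ∀ z, x < z → z < B → z ∉ Sc := by
      intro z hz1 hz2 hz
      obtain ⟨w, hw1, hw2⟩ := mem_closure_iff.mp hz (Ioo x B) isOpen_Ioo ⟨hz1, hz2⟩
      exact hgapUR w hw1.1 hw1.2 hw2
    by_cases hxSc : x ∈ Sc
    · -- x is in Sc but in no Sₙ : intervals shrink to x
      have hAx : A = x := by
        by_contra h
        have hAx : A < x := lt_of_le_of_ne hAlex h
        refine hxL ⟨hxSc, A, hAx, ?_⟩
        exact eq_empty_iff_forall_notMem.mpr fun z hz => hgapScL z hz.1.1 hz.1.2 hz.2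
      have hBx : B = x := by
        by_contra h
        have hBx : x < B := lt_of_le_of_ne hBgex (Ne.symm h)
        refine hxR ⟨hxSc, B, hBx, ?_⟩
        exact eq_empty_iff_forall_notMem.mpr fun z hz => hgapScR z hz.1.1 hz.1.2 hz.2
      set w : ℕ → ℝ := fun n => (lep (S n) x + rep (S n) x) / 2 with hwdef
      set δ : ℕ → ℝ := fun n => (rep (S n) x - lep (S n) x) / 2 with hδdef
      have hδpos : ∀ n, 0 < δ n := fun n => by
        have := (hAn_lt n).trans (hBn_gt n); simp only [hδdef]; linarith
      have hδ0 : Tendsto δ atTop (𝓝[>] 0) := by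
        apply tendsto_nhdsWithin_of_tendsto_nhds_of_eventually_within
        · have : Tendsto (fun n => (rep (S n) x - lep (S n) x) / 2) atTop (𝓝 ((B - A) / 2)) :=
            (hBtend.sub hAtend).div_const 2
          rw [hAx, hBx] at this
          simpa using this
        · exact Eventually.of_forall fun n => hδpos n
      have hxball : ∀ n, x ∈ Metric.closedBall (w n) (1 * δ n) := by
        intro n
        rw [one_mul, Real.closedBall_eq_Icc]
        constructor
        · simp only [hwdef, hδdef]; linarith [(hAn_lt n), (hBn_gt n)]
        · simp only [hwdef, hδdef]; linarith [(hAn_lt n), (hBn_gt n)]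
      have hball := hxLeb w δ hδ0 (Eventually.of_forall hxball)
      have hψ'x : ψ' x = ψ x := indicator_of_mem hxI ψ
      rw [hψ'x] at hball
      have hR : condExpSet Sc ψ x = ψ x := if_pos hxSc
      rw [hR]
      refine Tendsto.congr (fun n => ?_) hball
      -- ⨍ over closedBall of ψ' = condExpSet (S n) ψ x
      have hcb : Metric.closedBall (w n) (δ n) = Icc (lep (S n) x) (rep (S n) x) := by
        rw [Real.closedBall_eq_Icc]
        congr 1 <;> (simp only [hwdef, hδdef]; ring)
      have h1 : (⨍ y in Metric.closedBall (w n) (δ n), ψ' y) =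
          ⨍ y in Ioo (lep (S n) x) (rep (S n) x), ψ' y := by
        rw [hcb, setAverage_eq, setAverage_eq, ← setIntegral_congr_set Ioo_ae_eq_Icc,
          measureReal_congr Ioo_ae_eq_Icc]
      have h2 : (⨍ y in Ioo (lep (S n) x) (rep (S n) x), ψ' y) =
          ⨍ y in Ioo (lep (S n) x) (rep (S n) x), ψ y := by
        rw [setAverage_eq, setAverage_eq,
          hIooInt _ _ (lep_nonneg (h01 n).1 hxI) (rep_le_one (h01 n).2 hxI)]
      rw [h1, h2, condExpSet, if_neg (hxSn n),
        comp_eq (hclosed n) (h01 n).1 (h01 n).2 hxI (hxSn n)]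
    · -- x is outside Sc : intervals converge to the component of Sc
      have hxI' : x ∈ Icc (0:ℝ) 1 \ Sc := ⟨hxI, hxSc⟩
      set A' := lep Sc x with hA'def
      set B' := rep Sc x with hB'def
      have hA'lt : A' < x := lep_lt hScClosed hSc0 hxI hxSc
      have hB'gt : x < B' := lt_rep hScClosed hSc1 hxI hxSc
      have hAA' : A = A' := by
        have h1 : A ≤ A' := ciSup_le fun n =>
          le_csSup ⟨x, fun _ hy => hy.2⟩ ⟨hSnSc n (lep_mem (hclosed n) (h01 n).1 hxI).1,
            (lep_mem (hclosed n) (h01 n).1 hxI).2⟩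
        rcases lt_or_eq_of_le h1 with h | h
        · exact absurd (lep_mem hScClosed hSc0 hxI).1 (hgapScL A' h hA'lt)
        · exact h
      have hBB' : B = B' := by
        have h1 : B' ≤ B := le_ciInf fun n =>
          csInf_le ⟨x, fun _ hy => hy.2⟩ ⟨hSnSc n (rep_mem (hclosed n) (h01 n).2 hxI).1,
            (rep_mem (hclosed n) (h01 n).2 hxI).2⟩
        rcases lt_or_eq_of_le h1 with h | h
        · exact absurd (rep_mem hScClosed hSc1 hxI).1 (hgapScR B' hB'gt h)
        · exact h.symm
      rw [hAA'] at hAtend hAleA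
      rw [hBB'] at hBtend hBgeB
      -- convergence of integrals via dominated convergence
      have hmeas : ∀ n, AEStronglyMeasurable
          ((Ioo (lep (S n) x) (rep (S n) x)).indicator ψ') volume :=
        fun n => hψ'int.aestronglyMeasurable.indicator measurableSet_Ioo
      have hbound : ∀ n, ∀ᵐ y ∂(volume : Measure ℝ),
          ‖(Ioo (lep (S n) x) (rep (S n) x)).indicator ψ' y‖ ≤ ‖ψ' y‖ :=
        fun n => Eventually.of_forall fun y => norm_indicator_le_norm_self ψ' y
      have hptwise : ∀ᵐ y ∂(volume : Measure ℝ),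
          Tendsto (fun n => (Ioo (lep (S n) x) (rep (S n) x)).indicator ψ' y) atTop
            (𝓝 ((Ioo A' B').indicator ψ' y)) := by
        have hA'null : (volume : Measure ℝ) {A'} = 0 := measure_singleton A'
        have hB'null : (volume : Measure ℝ) {B'} = 0 := measure_singleton B'
        filter_upwards [measure_eq_zero_iff_ae_notMem.mp hA'null,
          measure_eq_zero_iff_ae_notMem.mp hB'null] with y hyA hyB
        simp only [mem_singleton_iff] at hyA hyB
        by_cases hy1 : y < A'
        · have hev : ∀ᶠ n in atTop, (Ioo (lep (S n) x) (rep (S n) x)).indicator ψ' y = 0 := by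
            filter_upwards [hAtend.eventually (eventually_gt_nhds hy1)] with n hn
            exact indicator_of_notMem (fun hy => absurd hy.1 (not_lt.mpr hn.le)) ψ'
          rw [indicator_of_notMem (fun hy => absurd hy.1 (not_lt.mpr hy1.le)) ψ']
          exact Tendsto.congr' (hev.mono fun n hn => hn.symm) tendsto_const_nhds
        · by_cases hy2 : B' < y
          · have hev : ∀ᶠ n in atTop, (Ioo (lep (S n) x) (rep (S n) x)).indicator ψ' y = 0 := by
              filter_upwards [hBtend.eventually (eventually_lt_nhds hy2)] with n hn
              exact indicator_of_notMem (fun hy => absurd hy.2 (not_lt.mpr hn.le)) ψ'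
            rw [indicator_of_notMem (fun hy => absurd hy.2 (not_lt.mpr hy2.le)) ψ']
            exact Tendsto.congr' (hev.mono fun n hn => hn.symm) tendsto_const_nhds
          · push_neg at hy1 hy2
            have hyIoo : y ∈ Ioo A' B' :=
              ⟨lt_of_le_of_ne hy1 (Ne.symm hyA), lt_of_le_of_ne hy2 hyB⟩
            have : ∀ n, (Ioo (lep (S n) x) (rep (S n) x)).indicator ψ' y = ψ' y := fun n =>
              Set.indicator_of_mem (show y ∈ Ioo (lep (S n) x) (rep (S n) x) from
                ⟨lt_of_le_of_lt (hAleA n) hyIoo.1, lt_of_lt_of_le hyIoo.2 (hBgeB n)⟩) ψ'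
            rw [indicator_of_mem hyIoo ψ']
            exact Tendsto.congr (fun n => (this n).symm) tendsto_const_nhds
      have hInt : Tendsto (fun n => ∫ y in Ioo (lep (S n) x) (rep (S n) x), ψ' y) atTop
          (𝓝 (∫ y in Ioo A' B', ψ' y)) := by
        have := tendsto_integral_of_dominated_convergence (fun y => ‖ψ' y‖)
          hmeas hψ'int.norm hbound hptwise
        simpa [integral_indicator measurableSet_Ioo] using this
      have hVol : Tendsto (fun n => rep (S n) x - lep (S n) x) atTop (𝓝 (B' - A')) :=
        hBtend.sub hAtend
      have hVolInv : Tendsto (fun n => (rep (S n) x - lep (S n) x)⁻¹) atTop (𝓝 (B' - A')⁻¹) :=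
        hVol.inv₀ (ne_of_gt (by linarith))
      have hAvg : Tendsto (fun n => (rep (S n) x - lep (S n) x)⁻¹ •
          ∫ y in Ioo (lep (S n) x) (rep (S n) x), ψ' y) atTop
          (𝓝 ((B' - A')⁻¹ • ∫ y in Ioo A' B', ψ' y)) := hVolInv.smul hInt
      -- identify with condExpSet values
      have hform : ∀ (T : Set ℝ), IsClosed T → (0:ℝ) ∈ T → (1:ℝ) ∈ T → x ∉ T →
          condExpSet T ψ x = (rep T x - lep T x)⁻¹ • ∫ y in Ioo (lep T x) (rep T x), ψ' y := by
        intro T hT h0 h1 hxT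
        rw [condExpSet, if_neg hxT, comp_eq hT h0 h1 hxI hxT, setAverage_eq,
          hIooInt _ _ (lep_nonneg h0 hxI) (rep_le_one h1 hxI), Real.volume_real_Ioo_of_le
          (by linarith [lep_lt hT h0 hxI hxT, lt_rep hT h1 hxI hxT])]
      have hRform : condExpSet Sc ψ x = (B' - A')⁻¹ • ∫ y in Ioo A' B', ψ' y :=
        hform Sc hScClosed hSc0 hSc1 hxSc
      rw [hRform]
      refine Tendsto.congr (fun n => ?_) hAvg
      exact (hform (S n) (hclosed n) (h01 n).1 (h01 n).2 (hxSn n)).symm
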